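/- For every γ > 0, the function h^γ(v) = v / ((1-v)^γ - γ(1-v)^{γ-1} v log v) is strictly increasing on (0,1): for u, v ∈ (0,1), h^γ(u) > h^γ(v) if and only if u > v. -/

import Mathlib

open Real

/-- The function h^γ(v) = v / φ^γ(v). -/
noncomputable def hFL (γ v : ℝ) : ℝ :=
  v / ((1 - v) ^ γ - γ * (1 - v) ^ (γ - 1) * v * Real.log v)

noncomputable def gFL (γ v : ℝ) : ℝ :=
  (1 - v) ^ γ / v - γ * (1 - v) ^ (γ - 1) * Real.log v

noncomputable def gFL' (γ v : ℝ) : ℝ :=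
  (γ * (1 - v) ^ (γ - 1) * (-1)) * v⁻¹ + (1 - v) ^ γ * (-(v ^ 2)⁻¹)
    - γ * (((γ - 1) * (1 - v) ^ (γ - 1 - 1) * (-1)) * Real.log v
        + (1 - v) ^ (γ - 1) * v⁻¹)

lemma gFL_pos (γ : ℝ) (hγ : 0 < γ) (v : ℝ) (hv0 : 0 < v) (hv1 : v < 1) :
    0 < gFL γ v := by
  have ha : (0:ℝ) < 1 - v := by linarith
  have h1 : 0 < (1 - v) ^ γ / v := div_pos (Real.rpow_pos_of_pos ha γ) hv0
  have h2 : γ * (1 - v) ^ (γ - 1) * Real.log v < 0 :=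
    mul_neg_of_pos_of_neg (mul_pos hγ (Real.rpow_pos_of_pos ha _)) (Real.log_neg hv0 hv1)
  unfold gFL; linarith

lemma gFL_hasDerivAt (γ : ℝ) (v : ℝ) (hv0 : 0 < v) (hv1 : v < 1) :
    HasDerivAt (gFL γ) (gFL' γ v) v := by
  have ha : (0:ℝ) < 1 - v := by linarith
  have h1 : HasDerivAt (fun x : ℝ => 1 - x) (-1) v := (hasDerivAt_id v).const_sub 1
  have hpow : ∀ p : ℝ, HasDerivAt (fun x : ℝ => (1 - x) ^ p)
      ((p * (1 - v) ^ (p - 1)) * (-1)) v := fun p =>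
    (Real.hasDerivAt_rpow_const (Or.inl ha.ne')).comp v h1
  have hinv : HasDerivAt (fun x : ℝ => x⁻¹) (-(v ^ 2)⁻¹) v := hasDerivAt_inv hv0.ne'
  have hlog : HasDerivAt Real.log v⁻¹ v := Real.hasDerivAt_log hv0.ne'
  have hf1 : HasDerivAt (fun x : ℝ => (1 - x) ^ γ * x⁻¹)
      ((γ * (1 - v) ^ (γ - 1) * (-1)) * v⁻¹ + (1 - v) ^ γ * (-(v ^ 2)⁻¹)) v := by
    have := (hpow γ).mul hinv
    exact this
  have hf2 : HasDerivAt (fun x : ℝ => γ * ((1 - x) ^ (γ - 1) * Real.log x))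
      (γ * (((γ - 1) * (1 - v) ^ (γ - 1 - 1) * (-1)) * Real.log v
        + (1 - v) ^ (γ - 1) * v⁻¹)) v := by
    have := ((hpow (γ - 1)).mul hlog).const_mul γ
    exact this
  have key := hf1.sub hf2
  have hfun : gFL γ = fun x : ℝ =>
      (1 - x) ^ γ * x⁻¹ - γ * ((1 - x) ^ (γ - 1) * Real.log x) := by
    funext x; unfold gFL; ring
  rw [hfun]
  exact key

lemma gFL'_neg (γ : ℝ) (hγ : 0 < γ) (v : ℝ) (hv0 : 0 < v) (hv1 : v < 1) :
    gFL' γ v < 0 := by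
  have ha : (0:ℝ) < 1 - v := by linarith
  set A := (1 - v) ^ (γ - 2) with hA
  have hApos : 0 < A := Real.rpow_pos_of_pos ha _
  have e1 : (1 - v) ^ γ = A * (1 - v) ^ 2 := by
    rw [hA, show γ = (γ - 2) + 2 by ring, Real.rpow_add ha]
    norm_num [Real.rpow_two]
  have e2 : (1 - v) ^ (γ - 1) = A * (1 - v) := by
    rw [hA, show γ - 1 = (γ - 2) + 1 by ring, Real.rpow_add ha, Real.rpow_one]
  have e3 : (1 - v) ^ (γ - 1 - 1) = A := by
    rw [hA, show γ - 1 - 1 = γ - 2 by ring]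
  set L := Real.log v with hL
  have hLneg : L < 0 := Real.log_neg hv0 hv1
  have hLv : -(L * v) < 1 - v := by
    have h := Real.log_lt_sub_one_of_pos (inv_pos.mpr hv0) (by
      intro h; rw [inv_eq_one] at h; linarith)
    rw [Real.log_inv] at h
    have h2 := mul_lt_mul_of_pos_right h hv0
    calc -(L * v) = -L * v := by ring
      _ < (v⁻¹ - 1) * v := h2
      _ = 1 - v := by field_simp
  have hN : -2 * γ * (1 - v) * v - (1 - v) ^ 2 + γ * (γ - 1) * L * v ^ 2 < 0 := by
    rcases le_or_gt γ 1 with hg1 | hg1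
    · have hc : 0 ≤ γ * (1 - γ) * v :=
        mul_nonneg (mul_nonneg hγ.le (by linarith)) hv0.le
      have h1 : γ * (1 - γ) * (-(L * v)) * v ≤ γ * (1 - γ) * (1 - v) * v := by
        calc γ * (1 - γ) * (-(L * v)) * v = (γ * (1 - γ) * v) * (-(L * v)) := by ring
          _ ≤ (γ * (1 - γ) * v) * (1 - v) := mul_le_mul_of_nonneg_left hLv.le hc
          _ = γ * (1 - γ) * (1 - v) * v := by ring
      have h2 : γ * (γ - 1) * L * v ^ 2 = γ * (1 - γ) * (-(L * v)) * v := by ring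
      nlinarith [pow_pos ha 2, mul_pos hγ (mul_pos ha hv0),
        mul_pos (mul_pos hγ hγ) (mul_pos ha hv0)]
    · have h2 : γ * (γ - 1) * L * v ^ 2 < 0 := by
        have hc : 0 < γ * (γ - 1) * v ^ 2 :=
          mul_pos (mul_pos hγ (by linarith)) (by positivity)
        calc γ * (γ - 1) * L * v ^ 2 = (γ * (γ - 1) * v ^ 2) * L := by ring
          _ < 0 := mul_neg_of_pos_of_neg hc hLneg
      nlinarith [pow_pos ha 2, mul_pos hγ (mul_pos ha hv0)]
  have hexpr : gFL' γ v
      = A * (-2 * γ * (1 - v) * v - (1 - v) ^ 2 + γ * (γ - 1) * L * v ^ 2) / v ^ 2 := by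
    unfold gFL'
    rw [e1, e2, e3]
    field_simp
    ring
  rw [hexpr]
  exact div_neg_of_neg_of_pos (mul_neg_of_pos_of_neg hApos hN) (by positivity)

lemma gFL_strictAnti (γ : ℝ) (hγ : 0 < γ) :
    StrictAntiOn (gFL γ) (Set.Ioo (0:ℝ) 1) := by
  have hcont : ContinuousOn (gFL γ) (Set.Ioo (0:ℝ) 1) := fun x hx =>
    ((gFL_hasDerivAt γ x hx.1 hx.2).continuousAt).continuousWithinAt
  have := strictAntiOn_of_deriv_neg (convex_Ioo (0:ℝ) 1) hcont ?_
  · exact this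
  · intro x hx
    rw [interior_Ioo] at hx
    rw [(gFL_hasDerivAt γ x hx.1 hx.2).deriv]
    exact gFL'_neg γ hγ x hx.1 hx.2

lemma hFL_eq (γ : ℝ) (v : ℝ) (hv0 : 0 < v) : hFL γ v = (gFL γ v)⁻¹ := by
  unfold hFL gFL
  rw [show (1 - v) ^ γ - γ * (1 - v) ^ (γ - 1) * v * Real.log v
      = v * ((1 - v) ^ γ / v - γ * (1 - v) ^ (γ - 1) * Real.log v) by
    field_simp]
  rw [div_mul_eq_div_div, div_self hv0.ne', one_div]

theorem hFL_strictMono (γ : ℝ) (hγ : 0 < γ)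
    (u v : ℝ) (hu : u ∈ Set.Ioo (0 : ℝ) 1) (hv : v ∈ Set.Ioo (0 : ℝ) 1) :
    hFL γ u > hFL γ v ↔ u > v := by
  have hm : StrictMonoOn (hFL γ) (Set.Ioo (0:ℝ) 1) := by
    intro a ha b hb hab
    rw [hFL_eq γ a ha.1, hFL_eq γ b hb.1]
    exact inv_strictAnti₀ (gFL_pos γ hγ b hb.1 hb.2)
      (gFL_strictAnti γ hγ ha hb hab)
  exact hm.lt_iff_lt hv hu
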